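/- Let ϑ_P = (ϑ, P) be a primitive random substitution of constant length ℓ. If ϑ_P is recognisable, then for all m ∈ N the power ϑ_P^m is recognisable and its recognisability radius satisfies κ(ϑ^m) ≤ ((ℓ^m − 1)/(ℓ − 1))·κ(ϑ). -/

import Mathlib

open Filter MeasureTheory

namespace RandomSubstitutionTheory

variable {A : Type*} [Fintype A] [DecidableEq A]

/-- The set of realisations of `ϑ(u)` for a word `u`. -/
def reals (θ : A → Finset (List A)) : List A → Finset (List A)
  | [] => {[]}
  | a :: u => (θ a).biUnion fun v => (reals θ u).image fun w => v ++ w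

/-- The set of realisations of `ϑ^n(u)` for a word `u`. -/
def realsIter (θ : A → Finset (List A)) : ℕ → List A → Finset (List A)
  | 0, u => {u}
  | n + 1, u => (reals θ u).biUnion fun v => realsIter θ n v

/-- `wordProb θ P u w` is the probability `P[ϑ_P(u) = w]`, each letter of `u` being
substituted independently. -/
noncomputable def wordProb (θ : A → Finset (List A)) (P : A → List A → ℝ) :
    List A → List A → ℝ
  | [], w => if w = [] then 1 else 0
  | a :: u, w =>
      ∑ v ∈ θ a, P a v * (if v <+: w then wordProb θ P u (w.drop v.length) else 0)

/-- `iterProb θ P n u w` is the probability `P[ϑ_P^n(u) = w]` of the induced Markov chain. -/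
noncomputable def iterProb (θ : A → Finset (List A)) (P : A → List A → ℝ) :
    ℕ → List A → List A → ℝ
  | 0, u, w => if u = w then 1 else 0
  | n + 1, u, w => ∑ v ∈ reals θ u, wordProb θ P u v * iterProb θ P n v w

/-- The substitution matrix `M_{ij} = E[|ϑ_P(a_j)|_{a_i}]`. -/
noncomputable def substM (θ : A → Finset (List A)) (P : A → List A → ℝ) :
    Matrix A A ℝ :=
  Matrix.of fun i j => ∑ w ∈ θ j, P j w * (w.count i : ℝ)

/-- The defining data of a random substitution: nonempty finite sets of nonempty words
and strictly positive probability vectors. -/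
def IsRandomSubstitution (θ : A → Finset (List A)) (P : A → List A → ℝ) : Prop :=
  (∀ a, (θ a).Nonempty) ∧ (∀ a, ∀ w ∈ θ a, w ≠ []) ∧
    (∀ a, ∀ w ∈ θ a, 0 < P a w) ∧ (∀ a w, w ∉ θ a → P a w = 0) ∧
    ∀ a, ∑ w ∈ θ a, P a w = 1

/-- Primitivity of the substitution matrix: some power has strictly positive entries. -/
def IsPrimitive (θ : A → Finset (List A)) (P : A → List A → ℝ) : Prop :=
  ∃ k : ℕ, ∀ i j : A, 0 < (substM θ P ^ k) i j

/-- The Perron–Frobenius eigenvalue is `> 1` (witnessed by a positive right eigenvector). -/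
def IsExpanding (θ : A → Finset (List A)) (P : A → List A → ℝ) : Prop :=
  ∃ lam : ℝ, 1 < lam ∧ ∃ R : A → ℝ, (∀ a, 0 < R a) ∧ (substM θ P).mulVec R = lam • R

/-- A word is legal if it occurs as a subword of some level-`k` inflation word. -/
def Legal (θ : A → Finset (List A)) (u : List A) : Prop :=
  ∃ (a : A) (k : ℕ) (w : List A), w ∈ realsIter θ k [a] ∧ u <:+: w

/-- All words of length `n` over the alphabet. -/
def allWords (A : Type*) [Fintype A] [DecidableEq A] (n : ℕ) : Finset (List A) :=
  (Finset.univ : Finset (Fin n → A)).image List.ofFn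

/-- All legal words of length `n`. -/
noncomputable def legalWords (θ : A → Finset (List A)) (n : ℕ) : Finset (List A) :=
  letI := Classical.decPred (Legal θ)
  (allWords A n).filter (Legal θ)

/-- The left shift on bi-infinite sequences. -/
def shift : (ℤ → A) → ℤ → A := fun x i => x (i + 1)

/-- The finite word of length `n` read off a bi-infinite sequence starting at position `m`. -/
def window (x : ℤ → A) (m : ℤ) (n : ℕ) : List A :=
  (List.range n).map fun t => x (m + (t : ℤ))

/-- The random substitution subshift `X_ϑ`. -/
def Xtheta (θ : A → Finset (List A)) : Set (ℤ → A) :=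
  {x | ∀ (m : ℤ) (n : ℕ), Legal θ (window x m n)}

/-- The cylinder set of the word `v` at position `m`. -/
def cylinder (v : List A) (m : ℤ) : Set (ℤ → A) :=
  {x | window x m v.length = v}

/-- The number `|w|_v` of (possibly overlapping) occurrences of `v` in `w`. -/
def occCount (v w : List A) : ℕ :=
  ((List.range w.length).filter fun i => decide (v <+: w.drop i)).length

/-- Expected length `E[|ϑ_P^k(a)|]`. -/
noncomputable def expLen (θ : A → Finset (List A)) (P : A → List A → ℝ)
    (k : ℕ) (a : A) : ℝ :=
  ∑ w ∈ realsIter θ k [a], iterProb θ P k [a] w * (w.length : ℝ)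

/-- Expected number of occurrences `E[|ϑ_P^k(a)|_v]`. -/
noncomputable def expCount (θ : A → Finset (List A)) (P : A → List A → ℝ)
    (k : ℕ) (a : A) (v : List A) : ℝ :=
  ∑ w ∈ realsIter θ k [a], iterProb θ P k [a] w * (occCount v w : ℝ)

/-- `μ` is the frequency measure of `(ϑ, P)`: a shift-invariant Borel probability measure
supported on `X_ϑ` whose cylinder values are the expected word frequencies. -/
def IsFrequencyMeasure [MeasurableSpace A] (θ : A → Finset (List A))
    (P : A → List A → ℝ) (μ : Measure (ℤ → A)) : Prop :=
  IsProbabilityMeasure μ ∧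
    (∀ s : Set (ℤ → A), MeasurableSet s → μ (shift ⁻¹' s) = μ s) ∧
    μ (Xtheta θ) = 1 ∧
    ∀ v : List A, Legal θ v → ∀ (m : ℤ) (a : A),
      Tendsto (fun k : ℕ => expCount θ P k a v / expLen θ P k a) atTop
        (nhds ((μ (cylinder v m)).toReal))

/-- The `n`-th entropy sum `∑_{u ∈ L_ϑ^n} -μ[u] log μ[u]`. -/
noncomputable def entropySeq [MeasurableSpace A] (θ : A → Finset (List A))
    (μ : Measure (ℤ → A)) (n : ℕ) : ℝ :=
  ∑ u ∈ legalWords θ n, Real.negMulLog ((μ (cylinder u 0)).toReal)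

/-- The measure-theoretic (Kolmogorov–Sinai) entropy of the shift with respect to `μ`,
computed along cylinder partitions. -/
noncomputable def measEntropy [MeasurableSpace A] (θ : A → Finset (List A))
    (μ : Measure (ℤ → A)) : ℝ :=
  limsup (fun n : ℕ => entropySeq θ μ n / (n : ℝ)) atTop

/-- The topological entropy of the subshift `X_ϑ`. -/
noncomputable def topEntropy (θ : A → Finset (List A)) : ℝ :=
  limsup (fun n : ℕ => Real.log ((legalWords θ n).card) / (n : ℝ)) atTop

/-- The entropy vector `H_{k,a} = H(ϑ_P^k(a))`. -/
noncomputable def Hvec (θ : A → Finset (List A)) (P : A → List A → ℝ)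
    (k : ℕ) (a : A) : ℝ :=
  ∑ w ∈ realsIter θ k [a], Real.negMulLog (iterProb θ P k [a] w)

/-- The inner product `H_k^T R`. -/
noncomputable def HdotR (θ : A → Finset (List A)) (P : A → List A → ℝ)
    (R : A → ℝ) (k : ℕ) : ℝ :=
  ∑ a, Hvec θ P k a * R a

/-- Binary entropy `H(p) = -p log p - (1-p) log (1-p)`. -/
noncomputable def binEnt (p : ℝ) : ℝ := Real.negMulLog p + Real.negMulLog (1 - p)

/-- Unique realisation paths: concatenation of level-`k` inflation words of the letters of a
legal word is injective. -/
def UniqueRealisationPaths (θ : A → Finset (List A)) : Prop :=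
  ∀ v : List A, Legal θ v → ∀ k : ℕ, ∀ f g : Fin v.length → List A,
    (∀ i, f i ∈ realsIter θ k [v.get i]) → (∀ i, g i ∈ realsIter θ k [v.get i]) →
      (List.ofFn f).flatten = (List.ofFn g).flatten → f = g

/-- The disjoint set condition. -/
def DisjointSetCondition (θ : A → Finset (List A)) : Prop :=
  ∀ (a : A) (k : ℕ), ∀ u ∈ θ a, ∀ v ∈ θ a, u ≠ v →
    ∀ w, w ∈ realsIter θ k u → w ∉ realsIter θ k v

/-- The identical set condition. -/
def IdenticalSetCondition (θ : A → Finset (List A)) : Prop :=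
  ∀ (a : A) (k : ℕ), ∀ u ∈ θ a, ∀ v ∈ θ a, realsIter θ k u = realsIter θ k v

/-- Identical production probabilities. -/
def IdenticalProductionProbabilities (θ : A → Finset (List A))
    (P : A → List A → ℝ) : Prop :=
  ∀ a : A, ∀ u ∈ θ a, ∀ v ∈ θ a, ∀ (k : ℕ) (w : List A),
    iterProb θ P k u w = iterProb θ P k v w

/-- The disjoint set condition for the `k`-th power `ϑ^k`. -/
def DisjointSetConditionPow (θ : A → Finset (List A)) (k : ℕ) : Prop :=
  ∀ (a : A) (j : ℕ), ∀ u ∈ realsIter θ k [a], ∀ v ∈ realsIter θ k [a], u ≠ v →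
    ∀ w, w ∈ realsIter θ (k * j) u → w ∉ realsIter θ (k * j) v

/-- The identical set condition for the `k`-th power `ϑ^k`. -/
def IdenticalSetConditionPow (θ : A → Finset (List A)) (k : ℕ) : Prop :=
  ∀ (a : A) (j : ℕ), ∀ u ∈ realsIter θ k [a], ∀ v ∈ realsIter θ k [a],
    realsIter θ (k * j) u = realsIter θ (k * j) v

/-- Identical production probabilities for the `k`-th power `ϑ^k`. -/
def IdenticalProductionProbabilitiesPow (θ : A → Finset (List A))
    (P : A → List A → ℝ) (k : ℕ) : Prop :=
  ∀ a : A, ∀ u ∈ realsIter θ k [a], ∀ v ∈ realsIter θ k [a], ∀ (j : ℕ) (w : List A),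
    iterProb θ P (k * j) u w = iterProb θ P (k * j) v w

/-- Compatibility: all realisations of a letter have the same abelianisation. -/
def Compatible (θ : A → Finset (List A)) : Prop :=
  ∀ a : A, ∀ u ∈ θ a, ∀ v ∈ θ a, ∀ b : A, u.count b = v.count b

/-- Constant length `ℓ ≥ 2`. -/
def ConstantLength (θ : A → Finset (List A)) (ℓ : ℕ) : Prop :=
  2 ≤ ℓ ∧ ∀ a : A, ∀ w ∈ θ a, w.length = ℓ

/-- The set `ϑ(y)` of bi-infinite sequences obtained by substituting each letter of `y`,
with the image of `y 0` beginning at position `0`. -/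
def substSeq (θ : A → Finset (List A)) (y : ℤ → A) : Set (ℤ → A) :=
  {x | ∃ v : ℤ → List A, (∀ j, v j ∈ θ (y j)) ∧
    ∃ p : ℤ → ℤ, p 0 = 0 ∧ (∀ j, p (j + 1) = p j + (v j).length) ∧
      ∀ (j : ℤ) (t : ℕ) (ht : t < (v j).length), x (p j + (t : ℤ)) = (v j).get ⟨t, ht⟩}

/-- `ϑ(X)` for a set of bi-infinite sequences. -/
def substImage (θ : A → Finset (List A)) (X : Set (ℤ → A)) : Set (ℤ → A) :=
  ⋃ y ∈ X, substSeq θ y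

/-- The set `ϑ^m(y)` of bi-infinite sequences. -/
def substSeqPow (θ : A → Finset (List A)) : ℕ → (ℤ → A) → Set (ℤ → A)
  | 0, y => {y}
  | m + 1, y => ⋃ z ∈ substSeq θ y, substSeqPow θ m z

/-- The maximal length of an inflation word of the letter `a` (equals the common length
when lengths are well-defined). -/
def maxLen (θ : A → Finset (List A)) (a : A) : ℕ := (θ a).sup List.length

/-- Recognisability: every `x ∈ X_ϑ` has a unique inflation-word decomposition. -/
def Recognisable (θ : A → Finset (List A)) : Prop :=
  ∀ x ∈ Xtheta θ, ∃! p : (ℤ → A) × ℕ,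
    p.1 ∈ Xtheta θ ∧ p.2 < maxLen θ (p.1 0) ∧
      (fun i => x (i - (p.2 : ℤ))) ∈ substSeq θ p.1

/-- Recognisability of the `m`-th power of a constant length-`ℓ` substitution. -/
def RecognisablePow (θ : A → Finset (List A)) (m ℓ : ℕ) : Prop :=
  ∀ x ∈ Xtheta θ, ∃! p : (ℤ → A) × ℕ,
    p.1 ∈ Xtheta θ ∧ p.2 < ℓ ^ m ∧
      (fun i => x (i - (p.2 : ℤ))) ∈ substSeqPow θ m p.1

/-- The set `ϑ^m([a])` of exact images of sequences in the cylinder `[a] ⊆ X_ϑ`. -/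
def inflCylPow (θ : A → Finset (List A)) (m : ℕ) (a : A) : Set (ℤ → A) :=
  ⋃ y ∈ {w ∈ Xtheta θ | w 0 = a}, substSeqPow θ m y

/-- `r` is a radius of local recognisability for `ϑ^m`. -/
def RecogPropPow (θ : A → Finset (List A)) (m r : ℕ) : Prop :=
  ∀ (a : A) (x : ℤ → A), x ∈ inflCylPow θ m a → ∀ y ∈ Xtheta θ,
    (∀ t : ℤ, -(r : ℤ) ≤ t → t ≤ (r : ℤ) → x t = y t) → y ∈ inflCylPow θ m a

/-- The recognisability radius `κ(ϑ^m)`. -/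
noncomputable def recogRadiusPow (θ : A → Finset (List A)) (m : ℕ) : ℕ :=
  sInf {r | RecogPropPow θ m r}

/-- The recognisability radius `κ(ϑ)`. -/
noncomputable def recogRadius (θ : A → Finset (List A)) : ℕ := recogRadiusPow θ 1

/-- The random word `ϑ_P^n(a)` is (a.s.) completely determined by `ϑ_P^{n+k}(a)`
in the Markov chain. -/
def DeterminedBy (θ : A → Finset (List A)) (P : A → List A → ℝ)
    (a : A) (n k : ℕ) : Prop :=
  ∀ v₁ v₂ w : List A, v₁ ∈ realsIter θ n [a] → v₂ ∈ realsIter θ n [a] →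
    0 < iterProb θ P n [a] v₁ * iterProb θ P k v₁ w →
      0 < iterProb θ P n [a] v₂ * iterProb θ P k v₂ w → v₁ = v₂

/-- The random words `ϑ_P^n(a)` and `ϑ_P^{n+k}(a)` are independent in the Markov chain. -/
def IndepSteps (θ : A → Finset (List A)) (P : A → List A → ℝ)
    (a : A) (n k : ℕ) : Prop :=
  ∀ v w : List A,
    iterProb θ P n [a] v * iterProb θ P k v w =
      iterProb θ P n [a] v * iterProb θ P (n + k) [a] w

/-- The substitution matrix of a marginal (deterministic) substitution. -/
def marginalM (ρ : A → List A) : Matrix A A ℝ :=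
  Matrix.of fun i j => ((ρ j).count i : ℝ)

/-- Geometric compatibility: a single positive left eigenvector with eigenvalue `λ > 1`
for all marginals. -/
def GeometricallyCompatible (θ : A → Finset (List A)) : Prop :=
  ∃ lam : ℝ, 1 < lam ∧ ∃ L : A → ℝ, (∀ a, 0 < L a) ∧
    ∀ ρ : A → List A, (∀ a, ρ a ∈ θ a) → Matrix.vecMul L (marginalM ρ) = lam • L



section Aux
set_option linter.unusedSectionVars false
variable {A : Type*} [Fintype A] [DecidableEq A] {θ : A → Finset (List A)} {ℓ : ℕ}

lemma window_eq_map (x : ℤ → A) (m : ℤ) (n : ℕ) :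
    window x m n = (List.range n).map (fun t : ℕ => x (m + (t : ℤ))) := by
  show List.map _ (List.flatMap (fun a : ℕ => [(a:ℤ)]) (List.range n)) = _
  rw [← List.map_eq_flatMap, List.map_map]
  rfl

lemma window_length (x : ℤ → A) (m : ℤ) (n : ℕ) : (window x m n).length = n := by
  rw [window_eq_map, List.length_map, List.length_range]

lemma window_getElem (x : ℤ → A) (m : ℤ) (n : ℕ) (i : ℕ) (hi : i < (window x m n).length) :
    (window x m n)[i] = x (m + i) := by
  simp only [window_eq_map, List.getElem_map, List.getElem_range]

lemma window_succ (x : ℤ → A) (m : ℤ) (n : ℕ) :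
    window x m (n + 1) = x m :: window x (m + 1) n := by
  apply List.ext_getElem
  · simp [window_length]
  · intro i h1 h2
    rcases i with _ | i
    · simp [window_getElem]
    · rw [window_getElem]
      simp only [List.getElem_cons_succ]
      rw [window_getElem]
      congr 1
      push_cast
      ring

lemma window_append (x : ℤ → A) (m : ℤ) (p q : ℕ) :
    window x m (p + q) = window x m p ++ window x (m + p) q := by
  apply List.ext_getElem
  · simp [window_length]
  · intro i h1 h2
    rw [window_getElem]
    rcases lt_or_ge i p with h | h
    · rw [List.getElem_append_left (by simpa [window_length] using h), window_getElem]
    · rw [List.getElem_append_right (by simpa [window_length] using h), window_getElem]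
      congr 1
      have : (i : ℤ) - p = (i - p : ℕ) := by
        have := h; push_cast [Nat.cast_sub h]; ring
      simp [window_length]
      push_cast [Nat.cast_sub h]
      ring

lemma window_shift (x : ℤ → A) (t m : ℤ) (n : ℕ) :
    window (fun i => x (i + t)) m n = window x (m + t) n := by
  apply List.ext_getElem
  · simp [window_length]
  · intro i h1 h2
    rw [window_getElem, window_getElem]
    congr 1
    ring

lemma window_infix (x : ℤ → A) {m m' : ℤ} {n n' : ℕ} (h1 : m' ≤ m)
    (h2 : m + n ≤ m' + n') : window x m n <:+: window x m' n' := by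
  set d : ℕ := (m - m').toNat with hd
  have hdz : (d : ℤ) = m - m' := Int.toNat_of_nonneg (by omega)
  have hdn : d + n ≤ n' := by omega
  set e : ℕ := n' - (d + n) with he
  have hsplit : n' = d + (n + e) := by omega
  rw [hsplit, window_append, window_append]
  refine ⟨window x m' d, window x (m' + d + n) e, ?_⟩
  have : m' + (d : ℤ) = m := by omega
  rw [this]
  simp

lemma mem_substSeq_iff (hcl : ConstantLength θ ℓ) (y x : ℤ → A) :
    x ∈ substSeq θ y ↔ ∀ j : ℤ, window x ((ℓ : ℤ) * j) ℓ ∈ θ (y j) := by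
  constructor
  · rintro ⟨v, hv, p, hp0, hps, hx⟩
    have hlen : ∀ j, ((v j).length : ℤ) = (ℓ : ℤ) := fun j => by
      exact_mod_cast congrArg Nat.cast (hcl.2 _ _ (hv j))
    have hpj : ∀ j : ℤ, p j = (ℓ : ℤ) * j := by
      intro j
      induction j using Int.induction_on with
      | zero => simpa using hp0
      | succ k ih =>
        rw [hps, ih, hlen]; ring
      | pred k ih =>
        have h1 := hps (-(k : ℤ) - 1)
        rw [hlen] at h1
        have h2 : (-(k:ℤ) - 1) + 1 = -(k:ℤ) := by ring
        rw [h2, ih] at h1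
        have : p (-(k:ℤ) - 1) = (ℓ:ℤ) * (-(k:ℤ)) - ℓ := by linarith
        rw [this]; ring
    intro j
    have hwv : window x ((ℓ : ℤ) * j) ℓ = v j := by
      apply List.ext_getElem
      · rw [window_length, hcl.2 _ _ (hv j)]
      · intro i h1 h2
        rw [window_getElem]
        have hi : i < (v j).length := h2
        have := hx j i hi
        rw [hpj] at this
        rw [this, List.get_eq_getElem]
    rw [hwv]; exact hv j
  · intro h
    refine ⟨fun j => window x ((ℓ : ℤ) * j) ℓ, h, fun j => (ℓ : ℤ) * j, by ring, ?_, ?_⟩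
    · intro j
      rw [window_length]
      push_cast
      ring
    · intro j t ht
      rw [List.get_eq_getElem, window_getElem]

lemma substSeq_shift (hcl : ConstantLength θ ℓ) {x y : ℤ → A} (h : x ∈ substSeq θ y) (t : ℤ) :
    (fun i => x (i + (ℓ : ℤ) * t)) ∈ substSeq θ (fun i => y (i + t)) := by
  rw [mem_substSeq_iff hcl] at h ⊢
  intro j
  rw [window_shift]
  have := h (j + t)
  rwa [show (ℓ:ℤ) * (j + t) = (ℓ:ℤ) * j + (ℓ:ℤ) * t by ring] at this

lemma mem_reals_nil {v : List A} : v ∈ reals θ [] ↔ v = [] := by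
  simp [reals]

lemma mem_reals_cons {a : A} {u : List A} {v : List A} :
    v ∈ reals θ (a :: u) ↔ ∃ w ∈ θ a, ∃ z ∈ reals θ u, v = w ++ z := by
  simp [reals, Finset.mem_biUnion, Finset.mem_image, eq_comm]

lemma reals_nonempty (hne : ∀ a, (θ a).Nonempty) (u : List A) : (reals θ u).Nonempty := by
  induction u with
  | nil => exact ⟨[], by simp [reals]⟩
  | cons a u ih =>
    obtain ⟨w, hw⟩ := hne a
    obtain ⟨z, hz⟩ := ih
    exact ⟨w ++ z, mem_reals_cons.2 ⟨w, hw, z, hz, rfl⟩⟩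

lemma reals_append {u₁ u₂ v₁ v₂ : List A} (h1 : v₁ ∈ reals θ u₁) (h2 : v₂ ∈ reals θ u₂) :
    v₁ ++ v₂ ∈ reals θ (u₁ ++ u₂) := by
  induction u₁ generalizing v₁ with
  | nil => rw [mem_reals_nil] at h1; simpa [h1] using h2
  | cons a u ih =>
    obtain ⟨w, hw, z, hz, rfl⟩ := mem_reals_cons.1 h1
    rw [List.cons_append]
    exact mem_reals_cons.2 ⟨w, hw, z ++ v₂, ih hz, by simp⟩

lemma realsIter_flip (n : ℕ) (u : List A) :
    realsIter θ (n + 1) u = (realsIter θ n u).biUnion (fun v => reals θ v) := by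
  induction n generalizing u with
  | zero =>
    show (reals θ u).biUnion (fun v => realsIter θ 0 v) = _
    simp [realsIter]
  | succ n ih =>
    show (reals θ u).biUnion (fun v => realsIter θ (n+1) v) = _
    calc (reals θ u).biUnion (fun v => realsIter θ (n+1) v)
        = (reals θ u).biUnion (fun v => (realsIter θ n v).biUnion (fun w => reals θ w)) := by
          apply Finset.biUnion_congr rfl
          intro v _
          exact ih v
      _ = ((reals θ u).biUnion (fun v => realsIter θ n v)).biUnion (fun w => reals θ w) := by
          rw [Finset.biUnion_biUnion]
      _ = _ := rfl

lemma legal_infix {u u' : List A} (h : u' <:+: u) (hu : Legal θ u) : Legal θ u' := by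
  obtain ⟨a, k, w, hw, hinf⟩ := hu
  exact ⟨a, k, w, hw, h.trans hinf⟩

lemma legal_reals (hne : ∀ a, (θ a).Nonempty) {u v : List A}
    (hu : Legal θ u) (hv : v ∈ reals θ u) : Legal θ v := by
  obtain ⟨a, k, w, hw, s, t, hst⟩ := hu
  obtain ⟨vs, hvs⟩ := reals_nonempty hne s
  obtain ⟨vt, hvt⟩ := reals_nonempty hne t
  refine ⟨a, k + 1, vs ++ v ++ vt, ?_, vs, vt, rfl⟩
  rw [realsIter_flip]
  refine Finset.mem_biUnion.2 ⟨w, hw, ?_⟩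
  rw [← hst]
  exact reals_append (reals_append hvs hv) hvt

lemma substSeqPow_one (y : ℤ → A) : substSeqPow θ 1 y = substSeq θ y := by
  show (⋃ z ∈ substSeq θ y, substSeqPow θ 0 z) = substSeq θ y
  ext x
  simp [substSeqPow]

lemma substSeqPow_flip (m : ℕ) (y : ℤ → A) :
    substSeqPow θ (m + 1) y = ⋃ z ∈ substSeqPow θ m y, substSeq θ z := by
  induction m generalizing y with
  | zero =>
    rw [substSeqPow_one]
    ext x
    simp [substSeqPow]
  | succ m ih =>
    show (⋃ z ∈ substSeq θ y, substSeqPow θ (m+1) z) = _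
    ext x
    simp only [Set.mem_iUnion]
    constructor
    · rintro ⟨z, hz, hx⟩
      rw [ih] at hx
      simp only [Set.mem_iUnion] at hx
      obtain ⟨w, hw, hx⟩ := hx
      exact ⟨w, show w ∈ substSeqPow θ (m+1) y from Set.mem_biUnion hz hw, hx⟩
    · rintro ⟨w, hw, hx⟩
      obtain ⟨z, hz, hw⟩ := Set.mem_iUnion₂.1 hw
      refine ⟨z, hz, ?_⟩
      rw [ih]
      exact Set.mem_biUnion hw hx

lemma shift_mem_Xtheta {x : ℤ → A} (hx : x ∈ Xtheta θ) (t : ℤ) :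
    (fun i => x (i + t)) ∈ Xtheta θ := by
  intro m n
  rw [window_shift]
  exact hx (m + t) n

lemma window_reals (hcl : ConstantLength θ ℓ) {x y : ℤ → A}
    (h : ∀ j : ℤ, window x ((ℓ : ℤ) * j) ℓ ∈ θ (y j)) (j₀ : ℤ) (N : ℕ) :
    window x ((ℓ : ℤ) * j₀) (ℓ * N) ∈ reals θ (window y j₀ N) := by
  induction N generalizing j₀ with
  | zero => simp [window, reals, mem_reals_nil]
  | succ N ih =>
    rw [window_succ, show ℓ * (N + 1) = ℓ + ℓ * N by ring, window_append]
    refine mem_reals_cons.2 ⟨window x ((ℓ:ℤ)*j₀) ℓ, h j₀, window x ((ℓ:ℤ)*j₀ + (ℓ:ℤ)) (ℓ*N), ?_, rfl⟩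
    have := ih (j₀ + 1)
    rwa [show (ℓ:ℤ) * (j₀ + 1) = (ℓ:ℤ) * j₀ + (ℓ:ℤ) by ring] at this

lemma substSeq_mem_Xtheta (hne : ∀ a, (θ a).Nonempty) (hcl : ConstantLength θ ℓ)
    {x y : ℤ → A} (hy : y ∈ Xtheta θ) (hx : x ∈ substSeq θ y) : x ∈ Xtheta θ := by
  have hl2 : 2 ≤ ℓ := hcl.1
  rw [mem_substSeq_iff hcl] at hx
  intro m n
  set j₀ : ℤ := m / (ℓ : ℤ) with hj₀
  have hℓpos : (0:ℤ) < (ℓ:ℤ) := by exact_mod_cast Nat.lt_of_lt_of_le (by norm_num) hl2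
  have hdm := Int.mul_ediv_add_emod m (ℓ : ℤ)
  have hr1 : 0 ≤ m % (ℓ:ℤ) := Int.emod_nonneg m (by omega)
  have hr2 : m % (ℓ:ℤ) < (ℓ:ℤ) := Int.emod_lt_of_pos m hℓpos
  have h1 : (ℓ:ℤ) * j₀ ≤ m := by rw [hj₀]; linarith
  set N : ℕ := n + 1 with hN
  have hnl : (n:ℤ) ≤ (ℓ:ℤ) * n := by nlinarith [hℓpos.le, Int.ofNat_nonneg n]
  have h2 : m + (n:ℤ) ≤ (ℓ:ℤ) * j₀ + ((ℓ * N : ℕ) : ℤ) := by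
    have : ((ℓ * N : ℕ) : ℤ) = (ℓ:ℤ) * n + ℓ := by push_cast [hN]; ring
    rw [this, hj₀]
    linarith
  have hbig : window x ((ℓ:ℤ) * j₀) (ℓ * N) ∈ reals θ (window y j₀ N) :=
    window_reals hcl hx j₀ N
  have hlegal : Legal θ (window x ((ℓ:ℤ) * j₀) (ℓ * N)) :=
    legal_reals hne (hy j₀ N) hbig
  exact legal_infix (window_infix x h1 h2) hlegal

lemma substSeqPow_mem_Xtheta (hne : ∀ a, (θ a).Nonempty) (hcl : ConstantLength θ ℓ)
    {y : ℤ → A} (hy : y ∈ Xtheta θ) {m : ℕ} {x : ℤ → A} (hx : x ∈ substSeqPow θ m y) :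
    x ∈ Xtheta θ := by
  induction m generalizing y with
  | zero => rw [show substSeqPow θ 0 y = {y} from rfl] at hx; rwa [hx]
  | succ m ih =>
    obtain ⟨z, hz, hx⟩ := Set.mem_iUnion₂.1 hx
    exact ih (substSeq_mem_Xtheta hne hcl hy hz) hx

lemma maxLen_eq (hne : ∀ a, (θ a).Nonempty) (hcl : ConstantLength θ ℓ) (a : A) :
    maxLen θ a = ℓ := by
  apply le_antisymm
  · exact Finset.sup_le fun w hw => le_of_eq (hcl.2 a w hw)
  · obtain ⟨w, hw⟩ := hne a
    calc ℓ = w.length := (hcl.2 a w hw).symm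
      _ ≤ _ := Finset.le_sup hw

lemma substSeqPow_zero (y : ℤ → A) : substSeqPow θ 0 y = {y} := rfl

lemma sub_zero_fun (x : ℤ → A) : (fun i => x (i - ((0:ℕ) : ℤ))) = x := by
  funext i; norm_num

lemma recognisablePow_all (hne : ∀ a, (θ a).Nonempty) (hcl : ConstantLength θ ℓ)
    (hrec : Recognisable θ) : ∀ m : ℕ, RecognisablePow θ m ℓ := by
  intro m
  induction m with
  | zero =>
    intro x hx
    refine ⟨(x, 0), ⟨hx, by norm_num, ?_⟩, ?_⟩
    · show (fun i => x (i - ((0:ℕ) : ℤ))) ∈ ({x} : Set (ℤ → A))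
      rw [sub_zero_fun]
      exact rfl
    · rintro ⟨y, k⟩ ⟨hy, hk, hmem⟩
      have hk0 : k = 0 := by simpa using hk
      subst hk0
      rw [substSeqPow_zero, Set.mem_singleton_iff, sub_zero_fun] at hmem
      rw [Prod.ext_iff]
      exact ⟨hmem.symm, rfl⟩
  | succ m ih =>
    intro x hx
    obtain ⟨⟨y, k⟩, ⟨hyX, hk, hyMem⟩, hyUniq⟩ := hrec x hx
    rw [maxLen_eq hne hcl] at hk
    obtain ⟨⟨z, q⟩, ⟨hzX, hq, hzMem⟩, hzUniq⟩ := ih y hyX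
    have hℓpos : 0 < ℓ := by have := hcl.1; omega
    refine ⟨(z, k + ℓ * q), ⟨hzX, ?_, ?_⟩, ?_⟩
    · show k + ℓ * q < ℓ ^ (m + 1)
      have h1 : ℓ * (q + 1) ≤ ℓ * ℓ ^ m := Nat.mul_le_mul_left ℓ hq
      have h2 : k + ℓ * q < ℓ * (q + 1) := by rw [Nat.mul_succ]; omega
      have h3 : ℓ * ℓ ^ m = ℓ ^ (m + 1) := by rw [pow_succ]; ring
      omega
    · show (fun i => x (i - ((k + ℓ * q : ℕ) : ℤ))) ∈ substSeqPow θ (m + 1) z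
      rw [substSeqPow_flip]
      have h2 := substSeq_shift hcl hyMem (-(q : ℤ))
      have h3 : (fun i => x (i - ((k + ℓ * q : ℕ) : ℤ))) ∈
          substSeq θ (fun i => y (i - ((q : ℕ) : ℤ))) := by
        have e1 : (fun i : ℤ => x (i - ((k + ℓ * q : ℕ) : ℤ))) =
            (fun i : ℤ => (fun j : ℤ => x (j - ((k : ℕ) : ℤ))) (i + (ℓ : ℤ) * (-(q : ℤ)))) := by
          funext i; show x _ = x _; congr 1; push_cast; try ring
        have e2 : (fun i : ℤ => y (i - ((q : ℕ) : ℤ))) =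
            (fun i : ℤ => y (i + (-(q : ℤ)))) := by
          funext i; congr 1; try ring
        rw [e1, e2]
        exact h2
      exact Set.mem_biUnion hzMem h3
    · rintro ⟨z', K⟩ ⟨hz'X, hK, hKmem⟩
      rw [substSeqPow_flip] at hKmem
      obtain ⟨w, hw, hxw⟩ := Set.mem_iUnion₂.1 hKmem
      set s : ℕ := K % ℓ with hs
      set q' : ℕ := K / ℓ with hq'def
      have hsl : s < ℓ := Nat.mod_lt _ hℓpos
      have hKe : K = ℓ * q' + s := by rw [hs, hq'def]; exact (Nat.div_add_mod K ℓ).symm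
      have hq'lt : q' < ℓ ^ m := by
        rw [hq'def]
        apply Nat.div_lt_of_lt_mul
        calc K < ℓ ^ (m + 1) := hK
          _ = ℓ * ℓ ^ m := by rw [pow_succ]; ring
      have h4 := substSeq_shift hcl hxw (q' : ℤ)
      have h5 : (fun i => x (i - ((s : ℕ) : ℤ))) ∈ substSeq θ (fun i => w (i + (q' : ℤ))) := by
        have e1 : (fun i : ℤ => x (i - ((s : ℕ) : ℤ))) =
            (fun i : ℤ => (fun j : ℤ => x (j - ((K : ℕ) : ℤ))) (i + (ℓ : ℤ) * (q' : ℤ))) := by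
          funext i; show x _ = x _; congr 1
          have : (K : ℤ) = (ℓ : ℤ) * (q' : ℤ) + (s : ℤ) := by exact_mod_cast congrArg Nat.cast hKe
          omega
        rw [e1]
        exact h4
      have hwX : w ∈ Xtheta θ := substSeqPow_mem_Xtheta hne hcl hz'X hw
      have hw'X : (fun i => w (i + (q' : ℤ))) ∈ Xtheta θ := shift_mem_Xtheta hwX _
      have h6 := hyUniq ((fun i => w (i + (q' : ℤ))), s)
        ⟨hw'X, by rw [maxLen_eq hne hcl]; exact hsl, h5⟩
      have hyw : (fun i : ℤ => w (i + (q' : ℤ))) = y := congrArg Prod.fst h6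
      have hsk : s = k := congrArg Prod.snd h6
      have hwy : w = (fun i : ℤ => y (i - (q' : ℤ))) := by
        funext i
        rw [← hyw]
        show w i = w (i - (q' : ℤ) + (q' : ℤ))
        congr 1; ring
      rw [hwy] at hw
      have h7 := hzUniq (z', q') ⟨hz'X, hq'lt, hw⟩
      have hz'z : z' = z := congrArg Prod.fst h7
      have hq'q : q' = q := congrArg Prod.snd h7
      rw [Prod.ext_iff]
      exact ⟨hz'z, by rw [hKe, hsk, hq'q, Nat.add_comm]⟩

lemma mem_inflCylPow_iff {m : ℕ} {a : A} {x : ℤ → A} :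
    x ∈ inflCylPow θ m a ↔ ∃ y, y ∈ Xtheta θ ∧ y 0 = a ∧ x ∈ substSeqPow θ m y := by
  constructor
  · intro h
    obtain ⟨y, hy, hx⟩ := Set.mem_iUnion₂.1 h
    exact ⟨y, hy.1, hy.2, hx⟩
  · rintro ⟨y, h1, h2, h3⟩
    exact Set.mem_biUnion (Set.mem_sep h1 h2) h3

lemma recogProp_pow (hne : ∀ a, (θ a).Nonempty) (hcl : ConstantLength θ ℓ)
    (hrec : Recognisable θ) (κ : ℕ) (hκ : RecogPropPow θ 1 κ) :
    ∀ m : ℕ, RecogPropPow θ (m + 1) ((∑ i ∈ Finset.range (m + 1), ℓ ^ i) * κ) := by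
  have hℓ2 : 2 ≤ ℓ := hcl.1
  intro m
  induction m with
  | zero =>
    have : (∑ i ∈ Finset.range 1, ℓ ^ i) * κ = κ := by simp
    rw [this]
    exact hκ
  | succ m hIH =>
    set c1 : ℕ := ∑ i ∈ Finset.range (m + 1), ℓ ^ i with hc1def
    set c2 : ℕ := ∑ i ∈ Finset.range (m + 2), ℓ ^ i with hc2def
    have hkey : c2 * κ = ℓ * (c1 * κ) + κ := by
      rw [hc2def, hc1def, geom_sum_succ]
      ring
    intro a x hx y hyX hagree
    obtain ⟨y₀, hy₀X, hy₀a, hxpow⟩ := mem_inflCylPow_iff.1 hx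
    rw [substSeqPow_flip] at hxpow
    obtain ⟨z, hz, hxz⟩ := Set.mem_iUnion₂.1 hxpow
    have hzX : z ∈ Xtheta θ := substSeqPow_mem_Xtheta hne hcl hy₀X hz
    have hx1 : x ∈ inflCylPow θ 1 (z 0) :=
      mem_inflCylPow_iff.2 ⟨z, hzX, rfl, by rw [substSeqPow_one]; exact hxz⟩
    have hc2pos : 1 ≤ c2 := by
      have h0 : ℓ ^ 0 ≤ c2 := Finset.single_le_sum
        (f := fun i => ℓ ^ i) (fun i _ => Nat.zero_le _) (Finset.mem_range.2 (by omega))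
      simpa using h0
    have hκc2 : (κ : ℤ) ≤ ((c2 * κ : ℕ) : ℤ) := by
      have : κ ≤ c2 * κ := Nat.le_mul_of_pos_left κ (by omega)
      exact_mod_cast this
    have hagκ : ∀ t : ℤ, -(κ : ℤ) ≤ t → t ≤ (κ : ℤ) → x t = y t := by
      intro t h1 h2
      exact hagree t (by linarith) (by linarith)
    have hy1 : y ∈ inflCylPow θ 1 (z 0) := hκ (z 0) x hx1 y hyX hagκ
    obtain ⟨z', hz'X, hz'0, hyz'⟩ := mem_inflCylPow_iff.1 hy1
    rw [substSeqPow_one] at hyz'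
    have hletters : ∀ t : ℤ, -((c1 * κ : ℕ) : ℤ) ≤ t → t ≤ ((c1 * κ : ℕ) : ℤ) → z t = z' t := by
      intro t ht1 ht2
      have hxt := substSeq_shift hcl hxz t
      have hyt := substSeq_shift hcl hyz' t
      have hztX := shift_mem_Xtheta hzX t
      have hxtc : (fun i => x (i + (ℓ : ℤ) * t)) ∈ inflCylPow θ 1 (z t) :=
        mem_inflCylPow_iff.2 ⟨fun i => z (i + t), hztX, by show z (0 + t) = z t; rw [zero_add],
          by rw [substSeqPow_one]; exact hxt⟩
      have hcast : ((c2 * κ : ℕ) : ℤ) = (ℓ : ℤ) * ((c1 * κ : ℕ) : ℤ) + (κ : ℤ) := by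
        exact_mod_cast congrArg (Nat.cast : ℕ → ℤ) hkey
      have hagree' : ∀ s : ℤ, -(κ : ℤ) ≤ s → s ≤ (κ : ℤ) →
          (fun i => x (i + (ℓ : ℤ) * t)) s = (fun i => y (i + (ℓ : ℤ) * t)) s := by
        intro s h1 h2
        show x (s + (ℓ : ℤ) * t) = y (s + (ℓ : ℤ) * t)
        have hb1 : (ℓ : ℤ) * t ≤ (ℓ : ℤ) * ((c1 * κ : ℕ) : ℤ) :=
          mul_le_mul_of_nonneg_left ht2 (by positivity)
        have hb2 : -((ℓ : ℤ) * ((c1 * κ : ℕ) : ℤ)) ≤ (ℓ : ℤ) * t := by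
          have := mul_le_mul_of_nonneg_left ht1 (show (0:ℤ) ≤ (ℓ:ℤ) by positivity)
          linarith [this]
        exact hagree _ (by linarith) (by linarith)
      have hyt1 : (fun i => y (i + (ℓ : ℤ) * t)) ∈ inflCylPow θ 1 (z t) :=
        hκ (z t) _ hxtc _ (shift_mem_Xtheta hyX _) hagree'
      obtain ⟨u, huX, hu0, hyu⟩ := mem_inflCylPow_iff.1 hyt1
      rw [substSeqPow_one] at hyu
      have hytX : (fun i => y (i + (ℓ : ℤ) * t)) ∈ Xtheta θ := shift_mem_Xtheta hyX _
      obtain ⟨p, _, hpUniq⟩ := hrec _ hytX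
      have h6 := hpUniq (u, 0) ⟨huX,
        by show (0:ℕ) < maxLen θ (u 0); rw [maxLen_eq hne hcl]; omega,
        by simpa using hyu⟩
      have h7 := hpUniq ((fun i => z' (i + t)), 0) ⟨shift_mem_Xtheta hz'X t,
        by show (0:ℕ) < maxLen θ (z' (0 + t)); rw [maxLen_eq hne hcl]; omega,
        by simpa using hyt⟩
      have huz' : u = (fun i => z' (i + t)) := congrArg Prod.fst (h6.trans h7.symm)
      calc z t = u 0 := hu0.symm
        _ = z' (0 + t) := congrFun huz' 0
        _ = z' t := by rw [zero_add]
    have hzInfl : z ∈ inflCylPow θ (m + 1) a := mem_inflCylPow_iff.2 ⟨y₀, hy₀X, hy₀a, hz⟩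
    have hz'Infl := hIH a z hzInfl z' hz'X hletters
    obtain ⟨y₁, hy₁X, hy₁a, hz'pow⟩ := mem_inflCylPow_iff.1 hz'Infl
    exact mem_inflCylPow_iff.2
      ⟨y₁, hy₁X, hy₁a, by rw [substSeqPow_flip]; exact Set.mem_biUnion hz'pow hyz'⟩

section Topo
variable [TopologicalSpace A] [DiscreteTopology A]

lemma isClosed_coord (t : ℤ) (c : A) : IsClosed {x : ℤ → A | x t = c} := by
  have h : {x : ℤ → A | x t = c} = (fun x : ℤ → A => x t) ⁻¹' {c} := rfl
  rw [h]
  exact IsClosed.preimage (continuous_apply t) (isClosed_discrete _)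

lemma isClosed_window_eq (m : ℤ) (n : ℕ) (u : List A) :
    IsClosed {x : ℤ → A | window x m n = u} := by
  by_cases hu : u.length = n
  · have h : {x : ℤ → A | window x m n = u} =
        ⋂ i : Fin n, {x : ℤ → A | x (m + (i : ℤ)) = u.get ⟨i, by omega⟩} := by
      ext x
      simp only [Set.mem_setOf_eq, Set.mem_iInter]
      constructor
      · intro h i
        rw [List.get_eq_getElem]
        calc x (m + (i : ℤ)) = (window x m n)[(i : ℕ)]'(by rw [window_length]; exact i.2) :=
              (window_getElem x m n i (by rw [window_length]; exact i.2)).symm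
          _ = _ := List.getElem_of_eq h _
      · intro h
        apply List.ext_getElem (by rw [window_length, hu])
        intro i h1 h2
        rw [window_getElem]
        have := h ⟨i, by rwa [window_length] at h1⟩
        rw [this, List.get_eq_getElem]
    rw [h]
    exact isClosed_iInter fun i => isClosed_coord _ _
  · have h : {x : ℤ → A | window x m n = u} = ∅ := by
      ext x
      simp only [Set.mem_setOf_eq, Set.mem_empty_iff_false, iff_false]
      intro hw
      exact hu (by rw [← hw, window_length])
    rw [h]
    exact isClosed_empty

lemma mem_allWords {u : List A} {n : ℕ} : u ∈ allWords A n ↔ u.length = n := by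
  constructor
  · intro h
    obtain ⟨f, _, rfl⟩ := Finset.mem_image.1 h
    exact List.length_ofFn
  · rintro rfl
    exact Finset.mem_image.2 ⟨u.get, Finset.mem_univ _, List.ofFn_get u⟩

lemma mem_legalWords {u : List A} {n : ℕ} :
    u ∈ legalWords θ n ↔ Legal θ u ∧ u.length = n := by
  letI := Classical.decPred (Legal θ)
  constructor
  · intro h
    have h' := Finset.mem_filter.1 h
    exact ⟨h'.2, mem_allWords.1 h'.1⟩
  · intro h
    exact Finset.mem_filter.2 ⟨mem_allWords.2 h.2, h.1⟩

lemma isClosed_Xtheta : IsClosed (Xtheta θ) := by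
  have h : Xtheta θ = ⋂ (m : ℤ), ⋂ (n : ℕ), {x : ℤ → A | Legal θ (window x m n)} := by
    ext x
    simp only [Xtheta, Set.mem_setOf_eq, Set.mem_iInter]
  rw [h]
  refine isClosed_iInter fun m => isClosed_iInter fun n => ?_
  have h2 : {x : ℤ → A | Legal θ (window x m n)} =
      ⋃ u ∈ (legalWords θ n : Finset (List A)), {x : ℤ → A | window x m n = u} := by
    ext x
    simp only [Set.mem_setOf_eq, Set.mem_iUnion, exists_prop]
    constructor
    · intro hL
      exact ⟨window x m n, mem_legalWords.2 ⟨hL, window_length x m n⟩, rfl⟩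
    · rintro ⟨u, hu, hw⟩
      rw [hw]
      exact (mem_legalWords.1 hu).1
  rw [h2]
  exact (legalWords θ n).finite_toSet.isClosed_biUnion fun u _ => isClosed_window_eq m n u

lemma isClosed_inflCyl (hcl : ConstantLength θ ℓ) (b : A) :
    IsClosed (inflCylPow θ 1 b) := by
  haveI : CompactSpace A := Finite.compactSpace
  set C : Set ((ℤ → A) × (ℤ → A)) :=
    {q | q.1 ∈ Xtheta θ ∧ q.1 0 = b ∧ ∀ j : ℤ, window q.2 ((ℓ : ℤ) * j) ℓ ∈ θ (q.1 j)}
    with hCdef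
  have hC : IsClosed C := by
    have he : C = (Prod.fst ⁻¹' Xtheta θ) ∩ ({q : (ℤ → A) × (ℤ → A) | q.1 0 = b}) ∩
        ⋂ j : ℤ, ⋃ c : A, ({q : (ℤ → A) × (ℤ → A) | q.1 j = c} ∩
          ⋃ w ∈ (θ c : Finset (List A)), {q : (ℤ → A) × (ℤ → A) | window q.2 ((ℓ:ℤ)*j) ℓ = w}) := by
      ext q
      simp only [hCdef, Set.mem_setOf_eq, Set.mem_inter_iff, Set.mem_preimage,
        Set.mem_iInter, Set.mem_iUnion, exists_prop]
      constructor
      · rintro ⟨h1, h2, h3⟩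
        exact ⟨⟨h1, h2⟩, fun j => ⟨q.1 j, rfl, window q.2 ((ℓ:ℤ)*j) ℓ, h3 j, rfl⟩⟩
      · rintro ⟨⟨h1, h2⟩, h3⟩
        refine ⟨h1, h2, fun j => ?_⟩
        obtain ⟨c, hc, w, hw, hww⟩ := h3 j
        rw [hww, hc]
        exact hw
    rw [he]
    refine IsClosed.inter (IsClosed.inter ?_ ?_) ?_
    · exact isClosed_Xtheta.preimage continuous_fst
    · exact (isClosed_coord 0 b).preimage continuous_fst
    · refine isClosed_iInter fun j => isClosed_iUnion_of_finite fun c => IsClosed.inter ?_ ?_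
      · exact (isClosed_coord j c).preimage continuous_fst
      · exact (θ c).finite_toSet.isClosed_biUnion fun w _ =>
          (isClosed_window_eq ((ℓ:ℤ)*j) ℓ w).preimage continuous_snd
  have him : inflCylPow θ 1 b = Prod.snd '' C := by
    ext x
    rw [mem_inflCylPow_iff]
    constructor
    · rintro ⟨y, hyX, hy0, hx⟩
      rw [substSeqPow_one, mem_substSeq_iff hcl] at hx
      exact ⟨(y, x), ⟨hyX, hy0, hx⟩, rfl⟩
    · rintro ⟨⟨y, x'⟩, ⟨h1, h2, h3⟩, hx⟩
      refine ⟨y, h1, h2, ?_⟩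
      rw [substSeqPow_one, mem_substSeq_iff hcl]
      cases hx
      exact h3
  rw [him]
  exact (hC.isCompact.image continuous_snd).isClosed

lemma isClosed_diff_inflCyl (hne : ∀ a, (θ a).Nonempty) (hcl : ConstantLength θ ℓ)
    (hrec : Recognisable θ) (b₀ : A) :
    IsClosed (Xtheta θ \ inflCylPow θ 1 b₀) := by
  have hℓpos : 0 < ℓ := by have := hcl.1; omega
  set D : A → ℕ → Set (ℤ → A) :=
    fun b k => {z | (fun i => z (i - (k : ℤ))) ∈ inflCylPow θ 1 b} with hDdef
  have hDclosed : ∀ b k, IsClosed (D b k) := by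
    intro b k
    have : Continuous (fun z : ℤ → A => (fun i => z (i - (k : ℤ)))) :=
      continuous_pi fun i => continuous_apply (i - (k : ℤ))
    exact (isClosed_inflCyl hcl b).preimage this
  have hDsub : ∀ b k, D b k ⊆ Xtheta θ := by
    intro b k z hz
    obtain ⟨y, hyX, _, hmem⟩ := mem_inflCylPow_iff.1 hz
    rw [substSeqPow_one] at hmem
    have hX' : (fun i => z (i - (k : ℤ))) ∈ Xtheta θ := substSeq_mem_Xtheta hne hcl hyX hmem
    have h2 := shift_mem_Xtheta hX' (k : ℤ)
    have e : z = fun i => z (i + (k : ℤ) - (k : ℤ)) := by funext i; congr 1; ring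
    rw [e]
    exact h2
  have hpart : Xtheta θ \ inflCylPow θ 1 b₀ =
      ⋃ (b : A), ⋃ (k : Fin ℓ), if (b, (k : ℕ)) = (b₀, 0) then ∅ else D b (k : ℕ) := by
    ext z
    simp only [Set.mem_diff, Set.mem_iUnion]
    constructor
    · rintro ⟨hzX, hznot⟩
      obtain ⟨⟨y, k⟩, ⟨hyX, hk, hmem⟩, _⟩ := hrec z hzX
      rw [maxLen_eq hne hcl] at hk
      have hzD : z ∈ D (y 0) k :=
        mem_inflCylPow_iff.2 ⟨y, hyX, rfl, by rw [substSeqPow_one]; exact hmem⟩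
      refine ⟨y 0, ⟨k, hk⟩, ?_⟩
      rw [if_neg ?_]
      · exact hzD
      · intro hcontra
        rw [Prod.ext_iff] at hcontra
        obtain ⟨hb, hk0⟩ := hcontra
        apply hznot
        have : k = 0 := hk0
        subst this
        refine mem_inflCylPow_iff.2 ⟨y, hyX, hb, ?_⟩
        rw [substSeqPow_one]
        have e := sub_zero_fun z
        rw [← e]
        exact hmem
    · rintro ⟨b, k, hz⟩
      by_cases hbk : (b, (k : ℕ)) = (b₀, 0)
      · rw [if_pos hbk] at hz
        exact absurd hz (Set.notMem_empty z)
      · rw [if_neg hbk] at hz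
        refine ⟨hDsub b k hz, ?_⟩
        intro hzin
        obtain ⟨y, hyX, hy0, hmem⟩ := mem_inflCylPow_iff.1 hz
        obtain ⟨y', hy'X, hy'0, hmem'⟩ := mem_inflCylPow_iff.1 hzin
        rw [substSeqPow_one] at hmem hmem'
        obtain ⟨p, _, hpUniq⟩ := hrec z (hDsub b k hz)
        have h1 := hpUniq (y, (k : ℕ))
          ⟨hyX, by show ((k:ℕ):ℕ) < maxLen θ (y 0); rw [maxLen_eq hne hcl]; exact k.2, hmem⟩
        have h2 := hpUniq (y', 0)
          ⟨hy'X, by show (0:ℕ) < maxLen θ (y' 0); rw [maxLen_eq hne hcl]; omega,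
            by rw [show (fun i => z (i - ((0:ℕ):ℤ))) = z from sub_zero_fun z]; exact hmem'⟩
        have h3 := h1.trans h2.symm
        have hyy : y = y' := congrArg Prod.fst h3
        have hkk : (k : ℕ) = 0 := congrArg Prod.snd h3
        apply hbk
        rw [Prod.ext_iff]
        exact ⟨by rw [← hy0, ← hy'0, hyy], hkk⟩
  rw [hpart]
  refine isClosed_iUnion_of_finite fun b => isClosed_iUnion_of_finite fun k => ?_
  by_cases hbk : (b, (k : ℕ)) = (b₀, 0)
  · rw [if_pos hbk]; exact isClosed_empty
  · rw [if_neg hbk]; exact hDclosed b k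

end Topo

lemma exists_recogProp (hne : ∀ a, (θ a).Nonempty) (hcl : ConstantLength θ ℓ)
    (hrec : Recognisable θ) : ∃ r : ℕ, RecogPropPow θ 1 r := by
  letI : TopologicalSpace A := ⊥
  haveI : DiscreteTopology A := ⟨rfl⟩
  haveI : CompactSpace A := Finite.compactSpace
  by_contra hno
  push_neg at hno
  have hex : ∀ r : ℕ, ∃ (a : A) (x y : ℤ → A), x ∈ inflCylPow θ 1 a ∧ y ∈ Xtheta θ ∧
      (∀ t : ℤ, -(r : ℤ) ≤ t → t ≤ (r : ℤ) → x t = y t) ∧ y ∉ inflCylPow θ 1 a := by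
    intro r
    have h := hno r
    unfold RecogPropPow at h
    push_neg at h
    obtain ⟨a, x, hx, y, hy, hagree, hyn⟩ := h
    exact ⟨a, x, y, hx, hy, hagree, hyn⟩
  choose a xx yy hx hy hagree hyn using hex
  set U : Ultrafilter ℕ := Ultrafilter.of atTop with hUdef
  have hUle : (U : Filter ℕ) ≤ atTop := Ultrafilter.of_le _
  have hbex : ∃ b : A, {r | a r = b} ∈ U := by
    by_contra hb
    push_neg at hb
    have h1 : ∀ b : A, {r | a r = b}ᶜ ∈ U :=
      fun b => Ultrafilter.compl_mem_iff_notMem.2 (hb b)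
    have h2 : (⋂ b : A, {r | a r = b}ᶜ) ∈ U := Filter.iInter_mem.2 h1
    have h3 : (⋂ b : A, {r | a r = b}ᶜ) = ∅ := by
      ext r
      simp
    rw [h3] at h2
    exact Filter.empty_notMem (U : Filter ℕ) h2
  obtain ⟨b, hb⟩ := hbex
  have hxmem : inflCylPow θ 1 b ∈ (U.map xx : Ultrafilter (ℤ → A)) := by
    rw [Ultrafilter.mem_map]
    refine Filter.mem_of_superset hb ?_
    intro r hr
    have := hx r
    rwa [hr] at this
  have hymem : (Xtheta θ \ inflCylPow θ 1 b) ∈ (U.map yy : Ultrafilter (ℤ → A)) := by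
    rw [Ultrafilter.mem_map]
    refine Filter.mem_of_superset hb ?_
    intro r hr
    refine ⟨hy r, ?_⟩
    have := hyn r
    rwa [hr] at this
  obtain ⟨xl, hxl, hxlle⟩ := ((isClosed_inflCyl hcl b).isCompact).ultrafilter_le_nhds
    (U.map xx) (Filter.le_principal_iff.2 hxmem)
  obtain ⟨yl, hyl, hylle⟩ := ((isClosed_diff_inflCyl hne hcl hrec b).isCompact).ultrafilter_le_nhds
    (U.map yy) (Filter.le_principal_iff.2 hymem)
  have hcoord : ∀ (f : ℕ → ℤ → A) (l : ℤ → A), (Ultrafilter.map f U : Filter (ℤ → A)) ≤ nhds l →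
      ∀ t : ℤ, {r | f r t = l t} ∈ U := by
    intro f l hle t
    have h1 : Filter.Tendsto (fun z : ℤ → A => z t) (nhds l) (nhds (l t)) :=
      (continuous_apply t).continuousAt
    have h2 : Filter.map (fun z : ℤ → A => z t) (Ultrafilter.map f U : Filter (ℤ → A)) ≤
        nhds (l t) := le_trans (Filter.map_mono hle) h1
    rw [nhds_discrete] at h2
    have h3 := h2 (Filter.mem_pure.2 (Set.mem_singleton (l t)))
    exact h3
  have hfinal : xl = yl := by
    funext t
    have h1 := hcoord xx xl hxlle t
    have h2 := hcoord yy yl hylle t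
    have h3 : {r : ℕ | xx r t = yy r t} ∈ U := by
      refine Filter.mem_of_superset (hUle (Filter.mem_atTop t.natAbs)) ?_
      intro r hr
      have hr' : t.natAbs ≤ r := hr
      exact hagree r t (by omega) (by omega)
    obtain ⟨r, hr⟩ := Filter.nonempty_of_mem
      (Filter.inter_mem (Filter.inter_mem h1 h2) h3)
    obtain ⟨⟨hr1, hr2⟩, hr3⟩ := hr
    rw [← hr1, ← hr2]
    exact hr3
  exact hyl.2 (hfinal ▸ hxl)

end Aux

theorem statement16 {A : Type*} [Fintype A] [DecidableEq A]
    (θ : A → Finset (List A)) (P : A → List A → ℝ) (ℓ : ℕ)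
    (hRS : IsRandomSubstitution θ P) (hprim : IsPrimitive θ P)
    (hcl : ConstantLength θ ℓ) (hrec : Recognisable θ) :
    ∀ m : ℕ, 1 ≤ m → RecognisablePow θ m ℓ ∧
      (recogRadiusPow θ m : ℝ) ≤
        ((ℓ : ℝ) ^ m - 1) / ((ℓ : ℝ) - 1) * (recogRadius θ : ℝ) := by
  have hne : ∀ a, (θ a).Nonempty := hRS.1
  have hℓ2 : 2 ≤ ℓ := hcl.1
  intro m hm
  obtain ⟨m', rfl⟩ : ∃ m', m = m' + 1 := ⟨m - 1, by omega⟩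
  refine ⟨recognisablePow_all hne hcl hrec (m' + 1), ?_⟩
  obtain ⟨r₀, hr₀⟩ := exists_recogProp hne hcl hrec
  have hset : {r : ℕ | RecogPropPow θ 1 r}.Nonempty := ⟨r₀, hr₀⟩
  have hκ : RecogPropPow θ 1 (recogRadius θ) := Nat.sInf_mem hset
  have hmain := recogProp_pow hne hcl hrec (recogRadius θ) hκ m'
  have hle : recogRadiusPow θ (m' + 1) ≤
      (∑ i ∈ Finset.range (m' + 1), ℓ ^ i) * recogRadius θ :=
    Nat.sInf_le (show _ ∈ {r : ℕ | RecogPropPow θ (m' + 1) r} from hmain)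
  have hne1 : ((ℓ : ℝ)) ≠ 1 := by
    have : (1 : ℝ) < (ℓ : ℝ) := by exact_mod_cast (by omega : 1 < ℓ)
    exact ne_of_gt this
  have hgeom : ∑ i ∈ Finset.range (m' + 1), ((ℓ : ℝ)) ^ i =
      ((ℓ : ℝ) ^ (m' + 1) - 1) / ((ℓ : ℝ) - 1) := geom_sum_eq hne1 (m' + 1)
  calc (recogRadiusPow θ (m' + 1) : ℝ)
      ≤ (((∑ i ∈ Finset.range (m' + 1), ℓ ^ i) * recogRadius θ : ℕ) : ℝ) := by
        exact_mod_cast hle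
    _ = (∑ i ∈ Finset.range (m' + 1), ((ℓ : ℝ)) ^ i) * (recogRadius θ : ℝ) := by
        push_cast
        ring
    _ = ((ℓ : ℝ) ^ (m' + 1) - 1) / ((ℓ : ℝ) - 1) * (recogRadius θ : ℝ) := by
        rw [hgeom]

end RandomSubstitutionTheory
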